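/- Let X ⊂ ℝ^p, Y ⊂ ℝ^q be compact sets with p ≥ q, α, β nonzero finite positive Radon measures, r > 0, and assume either that φ₁, φ₂ are superlinear strictly convex entropy functions satisfying (C2), or that φ₁ = φ₂ = ι_{{1}} with m(α) = m(β). If (M*, π*) minimizes the unregularized problem CR_rUOT(α,β): inf over (M,π) ∈ F_r × M⁺(X×Y) of −∫⟨Mx,y⟩ dπ + D_{φ₁}(π₁‖α) + D_{φ₂}(π₂‖β), then π* minimizes the Gromov–Wasserstein inner-product problem GW-IP(π₁*, π₂*) among all couplings with the same marginals as π*: π* minimizes ∫∫ (⟨x,x'⟩ − ⟨y,y'⟩)² dπ dπ over π ∈ Π(π₁*, π₂*). -/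

import Mathlib

open MeasureTheory Filter Set Pointwise
open scoped ENNReal NNReal

noncomputable section

/-- The recession slope `φ'_∞ = lim_{x→∞} φ(x)/x` of an entropy function. -/
def phiRecession (φ : ℝ → ℝ≥0∞) : ℝ≥0∞ :=
  Filter.limsup (fun x : ℝ => φ x / ENNReal.ofReal x) Filter.atTop

/-- An entropy function: convex, lower semicontinuous `φ : [0,∞) → [0,∞]` with `φ(1) = 0`. -/
def IsEntropyFunction (φ : ℝ → ℝ≥0∞) : Prop :=
  φ 1 = 0 ∧ LowerSemicontinuous φ ∧
    ∀ x ∈ Set.Ici (0 : ℝ), ∀ y ∈ Set.Ici (0 : ℝ), ∀ t ∈ Set.Icc (0 : ℝ) 1,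
      φ (t * x + (1 - t) * y) ≤ ENNReal.ofReal t * φ x + ENNReal.ofReal (1 - t) * φ y

/-- Strict convexity of an entropy function on its (finiteness) domain. -/
def IsStrictlyConvexEntropy (φ : ℝ → ℝ≥0∞) : Prop :=
  ∀ x ∈ Set.Ici (0 : ℝ), ∀ y ∈ Set.Ici (0 : ℝ), x ≠ y → φ x ≠ ⊤ → φ y ≠ ⊤ →
    ∀ t ∈ Set.Ioo (0 : ℝ) 1,
      φ (t * x + (1 - t) * y) < ENNReal.ofReal t * φ x + ENNReal.ofReal (1 - t) * φ y

/-- `dom φ = {x ∈ [0,∞) : φ(x) < ∞}`. -/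
def phiDom (φ : ℝ → ℝ≥0∞) : Set ℝ := {x | 0 ≤ x ∧ φ x ≠ ⊤}

/-- The entropy function `ι_{{1}}`: `0` at `1` and `+∞` elsewhere. -/
def iotaOne : ℝ → ℝ≥0∞ := fun x => if x = 1 then 0 else ⊤

/-- The φ-divergence `D_φ(μ‖ν) = ∫ φ(dμ/dν) dν + φ'_∞ · μ^⊥(univ)`. -/
def phiDiv {Z : Type*} [MeasurableSpace Z] (φ : ℝ → ℝ≥0∞) (μ ν : Measure Z) : ℝ≥0∞ :=
  (∫⁻ z, φ ((μ.rnDeriv ν z).toReal) ∂ν) + phiRecession φ * μ.singularPart ν Set.univ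

/-- The entropy function `φ_KL(x) = x log x − x + 1` generating the KL divergence. -/
def phiKL : ℝ → ℝ≥0∞ := fun x => ENNReal.ofReal (x * Real.log x - x + 1)

/-- The strong compatibility condition (C2). -/
def StrongCompat (φ₁ φ₂ : ℝ → ℝ≥0∞) (mα mβ : ℝ) : Prop :=
  ((interior (mα • phiDom φ₁) ∩ (mβ • phiDom φ₂)) ∪
    ((mα • phiDom φ₁) ∩ interior (mβ • phiDom φ₂))).Nonempty

/-- The Frobenius norm of a real `q × p` matrix. -/
def frobNorm {q p : ℕ} (M : Matrix (Fin q) (Fin p) ℝ) : ℝ :=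
  Real.sqrt (∑ i, ∑ j, (M i j) ^ 2)

/-- `C(π) = ∫ y xᵀ dπ(x,y)`, the entrywise integral of `(x,y) ↦ y xᵀ`. -/
def Cmat {p q : ℕ} (π : Measure ((Fin p → ℝ) × (Fin q → ℝ))) :
    Matrix (Fin q) (Fin p) ℝ :=
  Matrix.of fun i j => ∫ z, z.2 i * z.1 j ∂π

/-- `∫ ⟨Mx, y⟩ dπ(x,y)` with the Euclidean inner product on `ℝ^q`. -/
def ipIntegral {p q : ℕ} (M : Matrix (Fin q) (Fin p) ℝ)
    (π : Measure ((Fin p → ℝ) × (Fin q → ℝ))) : ℝ :=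
  ∫ z, ∑ i, ∑ j, M i j * z.1 j * z.2 i ∂π

/-- `M(π) = r·C(π)/‖C(π)‖_F` if `C(π) ≠ 0`, and `0` otherwise. -/
def Mopt {p q : ℕ} (r : ℝ) (π : Measure ((Fin p → ℝ) × (Fin q → ℝ))) :
    Matrix (Fin q) (Fin p) ℝ :=
  if Cmat π = 0 then 0 else (r / frobNorm (Cmat π)) • Cmat π

/-- The objective of `CR_rUOT_ε(α,β)`:
`(M,π) ↦ −∫⟨Mx,y⟩ dπ + D_{φ₁}(π₁‖α) + D_{φ₂}(π₂‖β) + ε·D_KL(π‖α⊗β)`. -/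
def Jip {p q : ℕ} (α : Measure (Fin p → ℝ)) (β : Measure (Fin q → ℝ))
    (φ₁ φ₂ : ℝ → ℝ≥0∞) (ε : ℝ) (M : Matrix (Fin q) (Fin p) ℝ)
    (π : Measure ((Fin p → ℝ) × (Fin q → ℝ))) : EReal :=
  ((-(ipIntegral M π) : ℝ) : EReal)
    + ((phiDiv φ₁ (π.map Prod.fst) α : ℝ≥0∞) : EReal)
    + ((phiDiv φ₂ (π.map Prod.snd) β : ℝ≥0∞) : EReal)
    + ((ENNReal.ofReal ε * phiDiv phiKL π (α.prod β) : ℝ≥0∞) : EReal)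

/-- The Gromov–Wasserstein inner-product objective `∫∫ (⟨x,x'⟩ − ⟨y,y'⟩)² dπ dπ`. -/
def gwObj {p q : ℕ} (π : Measure ((Fin p → ℝ) × (Fin q → ℝ))) : ℝ :=
  ∫ z, ∫ z', ((∑ j, z.1 j * z'.1 j) - (∑ i, z.2 i * z'.2 i)) ^ 2 ∂π ∂π

/-- Coordinate bound on a compact set. -/
lemma aux_bound {n : ℕ} {X : Set (Fin n → ℝ)} (hX : IsCompact X) :
    ∃ R : ℝ, 0 ≤ R ∧ ∀ x ∈ X, ∀ j, |x j| ≤ R := by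
  obtain ⟨C, hC⟩ := isBounded_iff_forall_norm_le.1 hX.isBounded
  refine ⟨max C 0, le_max_right _ _, fun x hx j => ?_⟩
  calc |x j| = ‖x j‖ := rfl
    _ ≤ ‖x‖ := norm_le_pi_norm x j
    _ ≤ C := hC x hx
    _ ≤ max C 0 := le_max_left _ _

variable {p q : ℕ} {π : Measure ((Fin p → ℝ) × (Fin q → ℝ))} [IsFiniteMeasure π] {R : ℝ}

lemma meas_coord₁ (j : Fin p) : Measurable (fun z : (Fin p → ℝ) × (Fin q → ℝ) => z.1 j) :=
  (measurable_pi_apply j).comp measurable_fst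

lemma meas_coord₂ (i : Fin q) : Measurable (fun z : (Fin p → ℝ) × (Fin q → ℝ) => z.2 i) :=
  (measurable_pi_apply i).comp measurable_snd

def BddSupp (π : Measure ((Fin p → ℝ) × (Fin q → ℝ))) (R : ℝ) : Prop :=
  ∀ᵐ z ∂π, (∀ j, |z.1 j| ≤ R) ∧ (∀ i, |z.2 i| ≤ R)

lemma int_coord (hπ : BddSupp π R) (i : Fin q) (j : Fin p) :
    Integrable (fun z : (Fin p → ℝ) × (Fin q → ℝ) => z.1 j * z.2 i) π := by
  refine Integrable.mono' (integrable_const (R * R))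
    ((meas_coord₁ j).mul (meas_coord₂ i)).aestronglyMeasurable ?_
  filter_upwards [hπ] with z hz
  have h1 := hz.1 j; have h2 := hz.2 i
  have h0 : (0:ℝ) ≤ R := le_trans (abs_nonneg _) h1
  calc ‖z.1 j * z.2 i‖ = |z.1 j| * |z.2 i| := abs_mul _ _
    _ ≤ R * R := mul_le_mul h1 h2 (abs_nonneg _) h0

lemma ip_eq (hπ : BddSupp π R) (M : Matrix (Fin q) (Fin p) ℝ) :
    ipIntegral M π = ∑ i, ∑ j, M i j * Cmat π i j := by
  have hint : ∀ (i : Fin q) (j : Fin p),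
      Integrable (fun z : (Fin p → ℝ) × (Fin q → ℝ) => M i j * (z.1 j * z.2 i)) π :=
    fun i j => (int_coord hπ i j).const_mul _
  rw [ipIntegral]
  simp_rw [mul_assoc]
  rw [integral_finset_sum _ (fun i _ => integrable_finset_sum _ (fun j _ => hint i j))]
  refine Finset.sum_congr rfl (fun i _ => ?_)
  rw [integral_finset_sum _ (fun j _ => hint i j)]
  refine Finset.sum_congr rfl (fun j _ => ?_)
  rw [integral_const_mul]
  congr 1
  show ∫ z, z.1 j * z.2 i ∂π = ∫ z, z.2 i * z.1 j ∂π
  exact integral_congr_ae (Filter.Eventually.of_forall fun z => mul_comm _ _)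
lemma frobNorm_nonneg {q p : ℕ} (M : Matrix (Fin q) (Fin p) ℝ) : 0 ≤ frobNorm M :=
  Real.sqrt_nonneg _

lemma frobNorm_sq {q p : ℕ} (M : Matrix (Fin q) (Fin p) ℝ) :
    frobNorm M ^ 2 = ∑ i, ∑ j, (M i j) ^ 2 := by
  rw [frobNorm, Real.sq_sqrt]
  positivity

lemma frobNorm_zero {q p : ℕ} : frobNorm (0 : Matrix (Fin q) (Fin p) ℝ) = 0 := by
  simp [frobNorm]

lemma frobNorm_smul {q p : ℕ} (c : ℝ) (M : Matrix (Fin q) (Fin p) ℝ) :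
    frobNorm (c • M) = |c| * frobNorm M := by
  have : ∀ i j, ((c • M) i j) ^ 2 = c ^ 2 * (M i j) ^ 2 := by
    intro i j; simp [Matrix.smul_apply]; ring
  simp only [frobNorm, this, ← Finset.mul_sum]
  rw [Real.sqrt_mul (sq_nonneg c), Real.sqrt_sq_eq_abs]

lemma frobNorm_pos {q p : ℕ} {M : Matrix (Fin q) (Fin p) ℝ} (hM : M ≠ 0) :
    0 < frobNorm M := by
  rw [frobNorm]
  apply Real.sqrt_pos.2
  by_contra h
  push_neg at h
  have hS : ∑ i, ∑ j, (M i j) ^ 2 = 0 := le_antisymm h (by positivity)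
  apply hM
  ext i j
  have h1 : ∀ i ∈ (Finset.univ : Finset (Fin q)), (0:ℝ) ≤ ∑ j, (M i j)^2 := by
    intro i _; positivity
  have h2 := (Finset.sum_eq_zero_iff_of_nonneg h1).1 hS i (Finset.mem_univ i)
  have h3 : ∀ j ∈ (Finset.univ : Finset (Fin p)), (0:ℝ) ≤ (M i j)^2 := fun j _ => sq_nonneg _
  have := (Finset.sum_eq_zero_iff_of_nonneg h3).1 h2 j (Finset.mem_univ j)
  simpa [pow_eq_zero_iff] using this

/-- Cauchy–Schwarz for the Frobenius inner product. -/
lemma frob_cauchy {q p : ℕ} (M N : Matrix (Fin q) (Fin p) ℝ) :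
    ∑ i, ∑ j, M i j * N i j ≤ frobNorm M * frobNorm N := by
  have key : (∑ ij : Fin q × Fin p, M ij.1 ij.2 * N ij.1 ij.2) ^ 2 ≤
      (∑ ij : Fin q × Fin p, (M ij.1 ij.2) ^ 2) * (∑ ij : Fin q × Fin p, (N ij.1 ij.2) ^ 2) :=
    Finset.sum_mul_sq_le_sq_mul_sq _ _ _
  have e1 : ∑ i, ∑ j, M i j * N i j = ∑ ij : Fin q × Fin p, M ij.1 ij.2 * N ij.1 ij.2 := by
    rw [← Finset.univ_product_univ, Finset.sum_product]
  have e2 : ∑ i, ∑ j, (M i j) ^ 2 = ∑ ij : Fin q × Fin p, (M ij.1 ij.2) ^ 2 := by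
    rw [← Finset.univ_product_univ, Finset.sum_product]
  have e3 : ∑ i, ∑ j, (N i j) ^ 2 = ∑ ij : Fin q × Fin p, (N ij.1 ij.2) ^ 2 := by
    rw [← Finset.univ_product_univ, Finset.sum_product]
  calc ∑ i, ∑ j, M i j * N i j
      ≤ |∑ i, ∑ j, M i j * N i j| := le_abs_self _
    _ = Real.sqrt ((∑ i, ∑ j, M i j * N i j) ^ 2) := (Real.sqrt_sq_eq_abs _).symm
    _ ≤ Real.sqrt ((∑ i, ∑ j, (M i j) ^ 2) * (∑ i, ∑ j, (N i j) ^ 2)) := by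
        apply Real.sqrt_le_sqrt
        rw [e1, e2, e3]; exact key
    _ = frobNorm M * frobNorm N := by
        rw [frobNorm, frobNorm, ← Real.sqrt_mul (by positivity)]

lemma frob_Mopt_le {r : ℝ} (hr : 0 ≤ r) (π : Measure ((Fin p → ℝ) × (Fin q → ℝ))) :
    frobNorm (Mopt r π) ≤ r := by
  rw [Mopt]
  split_ifs with h
  · rw [frobNorm_zero]; exact hr
  · rw [frobNorm_smul]
    have hC : 0 < frobNorm (Cmat π) := frobNorm_pos h
    rw [abs_of_nonneg (div_nonneg hr hC.le)]
    rw [div_mul_cancel₀ _ hC.ne']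

lemma ip_Mopt (hπ : BddSupp π R) {r : ℝ} :
    ipIntegral (Mopt r π) π = r * frobNorm (Cmat π) := by
  rw [ip_eq hπ, Mopt]
  split_ifs with h
  · simp [frobNorm_zero, h]
  · have hC : 0 < frobNorm (Cmat π) := frobNorm_pos h
    have : ∑ i, ∑ j, ((r / frobNorm (Cmat π)) • Cmat π) i j * Cmat π i j
        = (r / frobNorm (Cmat π)) * ∑ i, ∑ j, (Cmat π i j) ^ 2 := by
      rw [Finset.mul_sum]
      refine Finset.sum_congr rfl fun i _ => ?_
      rw [Finset.mul_sum]
      refine Finset.sum_congr rfl fun j _ => ?_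
      simp [Matrix.smul_apply]; ring
    rw [this, ← frobNorm_sq]
    field_simp

lemma abs_sum_mul_le {n : ℕ} {u v : Fin n → ℝ} {R : ℝ} (hR : 0 ≤ R)
    (hu : ∀ j, |u j| ≤ R) (hv : ∀ j, |v j| ≤ R) : |∑ j, u j * v j| ≤ n * R ^ 2 := by
  calc |∑ j, u j * v j| ≤ ∑ j, |u j * v j| := Finset.abs_sum_le_sum_abs _ _
    _ ≤ ∑ _j : Fin n, R ^ 2 := by
        refine Finset.sum_le_sum fun j _ => ?_
        rw [abs_mul, sq]
        exact mul_le_mul (hu j) (hv j) (abs_nonneg _) hR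
    _ = n * R ^ 2 := by simp [Finset.sum_const, nsmul_eq_mul]

lemma meas_A : Measurable (fun w : ((Fin p → ℝ) × (Fin q → ℝ)) × ((Fin p → ℝ) × (Fin q → ℝ)) =>
    ∑ j, w.1.1 j * w.2.1 j) :=
  Finset.measurable_sum _ fun j _ =>
    ((meas_coord₁ j).comp measurable_fst).mul ((meas_coord₁ j).comp measurable_snd)

lemma meas_B : Measurable (fun w : ((Fin p → ℝ) × (Fin q → ℝ)) × ((Fin p → ℝ) × (Fin q → ℝ)) =>
    ∑ i, w.1.2 i * w.2.2 i) :=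
  Finset.measurable_sum _ fun i _ =>
    ((meas_coord₂ i).comp measurable_fst).mul ((meas_coord₂ i).comp measurable_snd)

lemma gw_eq (hπ : BddSupp π R) (hR : 0 ≤ R) :
    gwObj π = (∫ z, ∫ z', (∑ j, z.1 j * z'.1 j) ^ 2 ∂π ∂π)
      - 2 * (∑ i, ∑ j, (Cmat π i j) ^ 2)
      + (∫ z, ∫ z', (∑ i, z.2 i * z'.2 i) ^ 2 ∂π ∂π) := by
  classical
  set Zt := (Fin p → ℝ) × (Fin q → ℝ)
  -- inner integrability facts for every fixed z
  have measA1 : ∀ z : Zt, Measurable (fun z' : Zt => ∑ j, z.1 j * z'.1 j) := fun z =>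
    Finset.measurable_sum _ fun j _ => (meas_coord₁ j).const_mul _
  have measB1 : ∀ z : Zt, Measurable (fun z' : Zt => ∑ i, z.2 i * z'.2 i) := fun z =>
    Finset.measurable_sum _ fun i _ => (meas_coord₂ i).const_mul _
  have boundA : ∀ z : Zt, ∀ᵐ z' ∂π, |∑ j, z.1 j * z'.1 j| ≤ (∑ j, |z.1 j|) * R := by
    intro z
    filter_upwards [hπ] with z' hz'
    calc |∑ j, z.1 j * z'.1 j| ≤ ∑ j, |z.1 j * z'.1 j| := Finset.abs_sum_le_sum_abs _ _
      _ ≤ ∑ j, |z.1 j| * R := by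
          refine Finset.sum_le_sum fun j _ => ?_
          rw [abs_mul]
          exact mul_le_mul_of_nonneg_left (hz'.1 j) (abs_nonneg _)
      _ = (∑ j, |z.1 j|) * R := by rw [Finset.sum_mul]
  have boundB : ∀ z : Zt, ∀ᵐ z' ∂π, |∑ i, z.2 i * z'.2 i| ≤ (∑ i, |z.2 i|) * R := by
    intro z
    filter_upwards [hπ] with z' hz'
    calc |∑ i, z.2 i * z'.2 i| ≤ ∑ i, |z.2 i * z'.2 i| := Finset.abs_sum_le_sum_abs _ _
      _ ≤ ∑ i, |z.2 i| * R := by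
          refine Finset.sum_le_sum fun i _ => ?_
          rw [abs_mul]
          exact mul_le_mul_of_nonneg_left (hz'.2 i) (abs_nonneg _)
      _ = (∑ i, |z.2 i|) * R := by rw [Finset.sum_mul]
  have intA2 : ∀ z : Zt, Integrable (fun z' : Zt => (∑ j, z.1 j * z'.1 j) ^ 2) π := by
    intro z
    refine Integrable.mono' (integrable_const (((∑ j, |z.1 j|) * R) ^ 2))
      ((measA1 z).pow_const 2).aestronglyMeasurable ?_
    filter_upwards [boundA z] with z' h
    rw [Real.norm_eq_abs, abs_pow]
    exact pow_le_pow_left₀ (abs_nonneg _) h 2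
  have intB2 : ∀ z : Zt, Integrable (fun z' : Zt => (∑ i, z.2 i * z'.2 i) ^ 2) π := by
    intro z
    refine Integrable.mono' (integrable_const (((∑ i, |z.2 i|) * R) ^ 2))
      ((measB1 z).pow_const 2).aestronglyMeasurable ?_
    filter_upwards [boundB z] with z' h
    rw [Real.norm_eq_abs, abs_pow]
    exact pow_le_pow_left₀ (abs_nonneg _) h 2
  have intAB : ∀ z : Zt, Integrable
      (fun z' : Zt => (∑ j, z.1 j * z'.1 j) * (∑ i, z.2 i * z'.2 i)) π := by
    intro z
    refine Integrable.mono' (integrable_const (((∑ j, |z.1 j|) * R) * ((∑ i, |z.2 i|) * R)))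
      ((measA1 z).mul (measB1 z)).aestronglyMeasurable ?_
    filter_upwards [boundA z, boundB z] with z' h1 h2
    rw [Real.norm_eq_abs, abs_mul]
    exact mul_le_mul h1 h2 (abs_nonneg _) (le_trans (abs_nonneg _) h1)
  -- inner cross-term identity
  have cross : ∀ z : Zt, ∫ z', (∑ j, z.1 j * z'.1 j) * (∑ i, z.2 i * z'.2 i) ∂π
      = ∑ i, ∑ j, (z.1 j * z.2 i) * Cmat π i j := by
    intro z
    have expand : ∀ z' : Zt, (∑ j, z.1 j * z'.1 j) * (∑ i, z.2 i * z'.2 i)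
        = ∑ i, ∑ j, (z.1 j * z.2 i) * (z'.1 j * z'.2 i) := by
      intro z'
      rw [Finset.sum_mul_sum, Finset.sum_comm]
      exact Finset.sum_congr rfl fun i _ => Finset.sum_congr rfl fun j _ => by ring
    simp_rw [expand]
    rw [integral_finset_sum _ (fun i _ => integrable_finset_sum _
      (fun j _ => (int_coord hπ i j).const_mul _))]
    refine Finset.sum_congr rfl fun i _ => ?_
    rw [integral_finset_sum _ (fun j _ => (int_coord hπ i j).const_mul _)]
    refine Finset.sum_congr rfl fun j _ => ?_
    rw [integral_const_mul]
    congr 1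
    show ∫ z', z'.1 j * z'.2 i ∂π = ∫ z', z'.2 i * z'.1 j ∂π
    exact integral_congr_ae (Filter.Eventually.of_forall fun z' => mul_comm _ _)
  -- inner split
  have step1 : ∀ z : Zt, ∫ z', ((∑ j, z.1 j * z'.1 j) - (∑ i, z.2 i * z'.2 i)) ^ 2 ∂π
      = (∫ z', (∑ j, z.1 j * z'.1 j) ^ 2 ∂π)
        - 2 * (∑ i, ∑ j, (z.1 j * z.2 i) * Cmat π i j)
        + (∫ z', (∑ i, z.2 i * z'.2 i) ^ 2 ∂π) := by
    intro z
    have ident : ∀ z' : Zt, ((∑ j, z.1 j * z'.1 j) - (∑ i, z.2 i * z'.2 i)) ^ 2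
        = (∑ j, z.1 j * z'.1 j) ^ 2
          - 2 * ((∑ j, z.1 j * z'.1 j) * (∑ i, z.2 i * z'.2 i))
          + (∑ i, z.2 i * z'.2 i) ^ 2 := fun z' => by ring
    simp_rw [ident]
    have h1 : Integrable (fun z' : Zt => (∑ j, z.1 j * z'.1 j) ^ 2
        - 2 * ((∑ j, z.1 j * z'.1 j) * (∑ i, z.2 i * z'.2 i))) π :=
      (intA2 z).sub ((intAB z).const_mul 2)
    rw [integral_add h1 (intB2 z),
      integral_sub (intA2 z) ((intAB z).const_mul 2), integral_const_mul, cross z]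
  -- outer integrability
  have measO1 : AEStronglyMeasurable (fun z : Zt => ∫ z', (∑ j, z.1 j * z'.1 j) ^ 2 ∂π) π := by
    have : StronglyMeasurable (fun w : Zt × Zt => (∑ j, w.1.1 j * w.2.1 j) ^ 2) :=
      (meas_A.pow_const 2).stronglyMeasurable
    exact this.integral_prod_right'.aestronglyMeasurable
  have measO3 : AEStronglyMeasurable (fun z : Zt => ∫ z', (∑ i, z.2 i * z'.2 i) ^ 2 ∂π) π := by
    have : StronglyMeasurable (fun w : Zt × Zt => (∑ i, w.1.2 i * w.2.2 i) ^ 2) :=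
      (meas_B.pow_const 2).stronglyMeasurable
    exact this.integral_prod_right'.aestronglyMeasurable
  have bndO1 : ∀ᵐ z ∂π, ‖∫ z', (∑ j, z.1 j * z'.1 j) ^ 2 ∂π‖
      ≤ ((p : ℝ) * R ^ 2) ^ 2 * (π Set.univ).toReal := by
    filter_upwards [hπ] with z hz
    refine norm_integral_le_of_norm_le_const ?_
    filter_upwards [hπ] with z' hz'
    rw [Real.norm_eq_abs, abs_pow]
    exact pow_le_pow_left₀ (abs_nonneg _) (abs_sum_mul_le hR hz.1 hz'.1) 2
  have bndO3 : ∀ᵐ z ∂π, ‖∫ z', (∑ i, z.2 i * z'.2 i) ^ 2 ∂π‖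
      ≤ ((q : ℝ) * R ^ 2) ^ 2 * (π Set.univ).toReal := by
    filter_upwards [hπ] with z hz
    refine norm_integral_le_of_norm_le_const ?_
    filter_upwards [hπ] with z' hz'
    rw [Real.norm_eq_abs, abs_pow]
    exact pow_le_pow_left₀ (abs_nonneg _) (abs_sum_mul_le hR hz.2 hz'.2) 2
  have intO1 : Integrable (fun z : Zt => ∫ z', (∑ j, z.1 j * z'.1 j) ^ 2 ∂π) π :=
    Integrable.mono' (integrable_const _) measO1 bndO1
  have intO3 : Integrable (fun z : Zt => ∫ z', (∑ i, z.2 i * z'.2 i) ^ 2 ∂π) π :=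
    Integrable.mono' (integrable_const _) measO3 bndO3
  have intO2 : Integrable (fun z : Zt => ∑ i, ∑ j, (z.1 j * z.2 i) * Cmat π i j) π :=
    integrable_finset_sum _ fun i _ => integrable_finset_sum _ fun j _ =>
      (int_coord hπ i j).mul_const _
  have key : gwObj π = (∫ z, ∫ z', (∑ j, z.1 j * z'.1 j) ^ 2 ∂π ∂π)
      - 2 * (∫ z, ∑ i, ∑ j, (z.1 j * z.2 i) * Cmat π i j ∂π)
      + (∫ z, ∫ z', (∑ i, z.2 i * z'.2 i) ^ 2 ∂π ∂π) := by
    rw [gwObj]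
    rw [integral_congr_ae (Filter.Eventually.of_forall step1)]
    have h1 : Integrable (fun z : Zt => (∫ z', (∑ j, z.1 j * z'.1 j) ^ 2 ∂π)
        - 2 * (∑ i, ∑ j, (z.1 j * z.2 i) * Cmat π i j)) π :=
      intO1.sub (intO2.const_mul 2)
    rw [integral_add h1 intO3, integral_sub intO1 (intO2.const_mul 2), integral_const_mul]
  have hT2 : ∫ z, ∑ i, ∑ j, (z.1 j * z.2 i) * Cmat π i j ∂π
      = ∑ i, ∑ j, (Cmat π i j) ^ 2 := by
    rw [integral_finset_sum _ (fun i _ => integrable_finset_sum _ fun j _ =>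
      (int_coord hπ i j).mul_const (Cmat π i j))]
    refine Finset.sum_congr rfl fun i _ => ?_
    rw [integral_finset_sum _ (fun j _ => (int_coord hπ i j).mul_const (Cmat π i j))]
    refine Finset.sum_congr rfl fun j _ => ?_
    rw [integral_mul_const, sq]
    congr 1
    show ∫ z, z.1 j * z.2 i ∂π = ∫ z, z.2 i * z.1 j ∂π
    exact integral_congr_ae (Filter.Eventually.of_forall fun z => mul_comm _ _)
  rw [key, hT2]

instance marg_fst_finite : IsFiniteMeasure (π.map (Prod.fst : (Fin p → ℝ) × (Fin q → ℝ) → Fin p → ℝ)) :=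
  ⟨by rw [Measure.map_apply measurable_fst MeasurableSet.univ]; exact measure_lt_top π _⟩

instance marg_snd_finite : IsFiniteMeasure (π.map (Prod.snd : (Fin p → ℝ) × (Fin q → ℝ) → Fin q → ℝ)) :=
  ⟨by rw [Measure.map_apply measurable_snd MeasurableSet.univ]; exact measure_lt_top π _⟩

lemma T1_marg : ∫ z, ∫ z', (∑ j, z.1 j * z'.1 j) ^ 2 ∂π ∂π
    = ∫ x, ∫ x', (∑ j, x j * x' j) ^ 2 ∂(π.map Prod.fst) ∂(π.map Prod.fst) := by
  have measf : StronglyMeasurable (fun w : (Fin p → ℝ) × (Fin p → ℝ) => (∑ j, w.1 j * w.2 j) ^ 2) :=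
    ((Finset.measurable_sum _ fun j _ => ((measurable_pi_apply j).comp measurable_fst).mul
      ((measurable_pi_apply j).comp measurable_snd)).pow_const 2).stronglyMeasurable
  have inner : ∀ z : (Fin p → ℝ) × (Fin q → ℝ), ∫ z', (∑ j, z.1 j * z'.1 j) ^ 2 ∂π
      = ∫ x', (∑ j, z.1 j * x' j) ^ 2 ∂(π.map Prod.fst) := fun z =>
    (integral_map measurable_fst.aemeasurable
      ((Finset.measurable_sum _ fun j _ =>
        (measurable_pi_apply j).const_mul _).pow_const 2).aestronglyMeasurable).symm
  rw [integral_congr_ae (Filter.Eventually.of_forall inner)]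
  exact (integral_map measurable_fst.aemeasurable
    measf.integral_prod_right'.aestronglyMeasurable).symm

lemma T2_marg : ∫ z, ∫ z', (∑ i, z.2 i * z'.2 i) ^ 2 ∂π ∂π
    = ∫ y, ∫ y', (∑ i, y i * y' i) ^ 2 ∂(π.map Prod.snd) ∂(π.map Prod.snd) := by
  have measf : StronglyMeasurable (fun w : (Fin q → ℝ) × (Fin q → ℝ) => (∑ i, w.1 i * w.2 i) ^ 2) :=
    ((Finset.measurable_sum _ fun i _ => ((measurable_pi_apply i).comp measurable_fst).mul
      ((measurable_pi_apply i).comp measurable_snd)).pow_const 2).stronglyMeasurable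
  have inner : ∀ z : (Fin p → ℝ) × (Fin q → ℝ), ∫ z', (∑ i, z.2 i * z'.2 i) ^ 2 ∂π
      = ∫ y', (∑ i, z.2 i * y' i) ^ 2 ∂(π.map Prod.snd) := fun z =>
    (integral_map measurable_snd.aemeasurable
      ((Finset.measurable_sum _ fun i _ =>
        (measurable_pi_apply i).const_mul _).pow_const 2).aestronglyMeasurable).symm
  rw [integral_congr_ae (Filter.Eventually.of_forall inner)]
  exact (integral_map measurable_snd.aemeasurable
    measf.integral_prod_right'.aestronglyMeasurable).symm

lemma isFiniteMeasure_smul {Z : Type*} [MeasurableSpace Z] (μ : Measure Z) [IsFiniteMeasure μ]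
    {c : ℝ≥0∞} (hc : c ≠ ⊤) : IsFiniteMeasure (c • μ) :=
  ⟨by rw [Measure.smul_apply, smul_eq_mul]
      exact ENNReal.mul_lt_top hc.lt_top (measure_lt_top μ _)⟩

lemma phiDiv_smul {Z : Type*} [MeasurableSpace Z] (φ : ℝ → ℝ≥0∞) (μ : Measure Z)
    [IsFiniteMeasure μ] {c : ℝ≥0∞} (hc : c ≠ ⊤) :
    phiDiv φ (c • μ) μ = φ c.toReal * μ Set.univ := by
  haveI := isFiniteMeasure_smul μ hc
  have hac : c • μ ≪ μ := by
    refine Measure.AbsolutelyContinuous.mk fun s _ hs => ?_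
    rw [Measure.smul_apply, hs, smul_eq_mul, mul_zero]
  have hsing : (c • μ).singularPart μ = 0 := (Measure.singularPart_eq_zero _ _).2 hac
  have hrn : (c • μ).rnDeriv μ =ᵐ[μ] fun _ => c := by
    filter_upwards [Measure.rnDeriv_smul_left_of_ne_top μ μ hc, Measure.rnDeriv_self μ]
      with z h1 h2
    rw [h1, Pi.smul_apply, h2, smul_eq_mul, mul_one]
  rw [phiDiv, hsing]
  simp only [Measure.coe_zero, Pi.zero_apply, mul_zero, add_zero]
  rw [lintegral_congr_ae (hrn.mono fun z hz => by rw [hz]), lintegral_const]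

lemma ennreal_coe_ereal_toReal {d : ℝ≥0∞} (hd : d ≠ ⊤) :
    (d : EReal) = ((d.toReal : ℝ) : EReal) := by
  conv_lhs => rw [← ENNReal.ofReal_toReal hd]
  rw [EReal.coe_ennreal_ofReal]
  exact max_eq_left (EReal.coe_nonneg.2 ENNReal.toReal_nonneg)

lemma Jip_eq_real {p q : ℕ} (α : Measure (Fin p → ℝ)) (β : Measure (Fin q → ℝ))
    (φ₁ φ₂ : ℝ → ℝ≥0∞) (M : Matrix (Fin q) (Fin p) ℝ)
    (π : Measure ((Fin p → ℝ) × (Fin q → ℝ)))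
    (hd1 : phiDiv φ₁ (π.map Prod.fst) α ≠ ⊤) (hd2 : phiDiv φ₂ (π.map Prod.snd) β ≠ ⊤) :
    Jip α β φ₁ φ₂ 0 M π = ((-(ipIntegral M π) + (phiDiv φ₁ (π.map Prod.fst) α).toReal
      + (phiDiv φ₂ (π.map Prod.snd) β).toReal : ℝ) : EReal) := by
  rw [Jip, ENNReal.ofReal_zero, zero_mul, EReal.coe_ennreal_zero, add_zero,
    ennreal_coe_ereal_toReal hd1, ennreal_coe_ereal_toReal hd2, ← EReal.coe_add, ← EReal.coe_add]

lemma Jip_top₁ {p q : ℕ} (α : Measure (Fin p → ℝ)) (β : Measure (Fin q → ℝ))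
    (φ₁ φ₂ : ℝ → ℝ≥0∞) (M : Matrix (Fin q) (Fin p) ℝ)
    (π : Measure ((Fin p → ℝ) × (Fin q → ℝ)))
    (hd1 : phiDiv φ₁ (π.map Prod.fst) α = ⊤) : Jip α β φ₁ φ₂ 0 M π = ⊤ := by
  rw [Jip, hd1, EReal.coe_ennreal_top]
  rw [EReal.add_top_of_ne_bot (EReal.coe_ne_bot _), EReal.top_add_of_ne_bot (EReal.coe_ennreal_ne_bot _),
    EReal.top_add_of_ne_bot (EReal.coe_ennreal_ne_bot _)]

lemma Jip_top₂ {p q : ℕ} (α : Measure (Fin p → ℝ)) (β : Measure (Fin q → ℝ))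
    (φ₁ φ₂ : ℝ → ℝ≥0∞) (M : Matrix (Fin q) (Fin p) ℝ)
    (π : Measure ((Fin p → ℝ) × (Fin q → ℝ)))
    (hd2 : phiDiv φ₂ (π.map Prod.snd) β = ⊤) : Jip α β φ₁ φ₂ 0 M π = ⊤ := by
  rw [Jip, hd2, EReal.coe_ennreal_top]
  rw [EReal.add_top_of_ne_bot, EReal.top_add_of_ne_bot (EReal.coe_ennreal_ne_bot _)]
  intro hbot
  rcases EReal.add_eq_bot_iff.1 hbot with h | h
  · exact EReal.coe_ne_bot _ h
  · exact EReal.coe_ennreal_ne_bot _ h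

lemma exists_good_c {p q : ℕ} (α : Measure (Fin p → ℝ)) (β : Measure (Fin q → ℝ))
    [IsFiniteMeasure α] [IsFiniteMeasure β] (hα : α ≠ 0) (hβ : β ≠ 0)
    (φ₁ φ₂ : ℝ → ℝ≥0∞)
    (hφ : (IsEntropyFunction φ₁ ∧ IsEntropyFunction φ₂ ∧
            phiRecession φ₁ = ⊤ ∧ phiRecession φ₂ = ⊤ ∧
            IsStrictlyConvexEntropy φ₁ ∧ IsStrictlyConvexEntropy φ₂ ∧
            StrongCompat φ₁ φ₂ (α Set.univ).toReal (β Set.univ).toReal) ∨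
          (φ₁ = iotaOne ∧ φ₂ = iotaOne ∧ α Set.univ = β Set.univ)) :
    ∃ c : ℝ≥0∞, c ≠ ⊤ ∧ φ₁ ((c * β Set.univ).toReal) ≠ ⊤ ∧
      φ₂ ((c * α Set.univ).toReal) ≠ ⊤ := by
  have hα0 : α Set.univ ≠ 0 := by
    simpa [Measure.measure_univ_ne_zero] using hα
  have hβ0 : β Set.univ ≠ 0 := by
    simpa [Measure.measure_univ_ne_zero] using hβ
  have hαT : α Set.univ ≠ ⊤ := measure_ne_top α _
  have hβT : β Set.univ ≠ ⊤ := measure_ne_top β _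
  rcases hφ with ⟨_, _, _, _, _, _, hC⟩ | ⟨hφ1, hφ2, hm⟩
  · obtain ⟨s, hs⟩ := hC
    have hs' : s ∈ ((α Set.univ).toReal • phiDom φ₁) ∩ ((β Set.univ).toReal • phiDom φ₂) := by
      rcases hs with h | h
      · exact ⟨interior_subset h.1, h.2⟩
      · exact ⟨h.1, interior_subset h.2⟩
    obtain ⟨a, ha, haa⟩ := hs'.1
    obtain ⟨b, hb, hbb⟩ := hs'.2
    have ha0 : 0 ≤ a := ha.1
    have hb0 : 0 ≤ b := hb.1
    have habs : a * (α Set.univ).toReal = b * (β Set.univ).toReal := by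
      have h1 : (α Set.univ).toReal * a = s := haa
      have h2 : (β Set.univ).toReal * b = s := hbb
      rw [mul_comm] at h1 h2
      rw [h1, h2]
    refine ⟨ENNReal.ofReal a / β Set.univ, (ENNReal.div_lt_top ENNReal.ofReal_ne_top hβ0).ne, ?_, ?_⟩
    · rw [ENNReal.div_mul_cancel hβ0 hβT, ENNReal.toReal_ofReal ha0]
      exact ha.2
    · have key : ENNReal.ofReal a * α Set.univ = ENNReal.ofReal b * β Set.univ := by
        conv_lhs => rw [← ENNReal.ofReal_toReal hαT]
        conv_rhs => rw [← ENNReal.ofReal_toReal hβT]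
        rw [← ENNReal.ofReal_mul ha0, ← ENNReal.ofReal_mul hb0, habs]
      have : ENNReal.ofReal a / β Set.univ * α Set.univ = ENNReal.ofReal b := by
        calc ENNReal.ofReal a / β Set.univ * α Set.univ
            = (ENNReal.ofReal a * α Set.univ) / β Set.univ := by
              rw [div_eq_mul_inv, div_eq_mul_inv]; ring
          _ = (ENNReal.ofReal b * β Set.univ) / β Set.univ := by rw [key]
          _ = ENNReal.ofReal b * (β Set.univ / β Set.univ) := by rw [mul_div_assoc]
          _ = ENNReal.ofReal b := by rw [ENNReal.div_self hβ0 hβT, mul_one]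
      rw [this, ENNReal.toReal_ofReal hb0]
      exact hb.2
  · refine ⟨(α Set.univ)⁻¹, ENNReal.inv_ne_top.2 hα0, ?_, ?_⟩
    · rw [← hm, ENNReal.inv_mul_cancel hα0 hαT]
      simp [hφ1, iotaOne]
    · rw [ENNReal.inv_mul_cancel hα0 hαT]
      simp [hφ2, iotaOne]

/-- **Optimal CR_rUOT plans solve GW-IP between their own marginals.** If `(M*, π*)`
minimizes the unregularized problem `CR_rUOT(α,β)`, then `π*` minimizes the
Gromov–Wasserstein inner-product objective among all couplings with the same marginals
as `π*`. -/
theorem stmt10 {p q : ℕ} (hpq : q ≤ p)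
    (X : Set (Fin p → ℝ)) (Y : Set (Fin q → ℝ))
    (hX : IsCompact X) (hY : IsCompact Y)
    (α : Measure (Fin p → ℝ)) (β : Measure (Fin q → ℝ))
    [IsFiniteMeasure α] [IsFiniteMeasure β]
    (hα : α ≠ 0) (hβ : β ≠ 0)
    (hαsupp : α Xᶜ = 0) (hβsupp : β Yᶜ = 0)
    (r : ℝ) (hr : 0 < r)
    (φ₁ φ₂ : ℝ → ℝ≥0∞)
    (hφ : (IsEntropyFunction φ₁ ∧ IsEntropyFunction φ₂ ∧
            phiRecession φ₁ = ⊤ ∧ phiRecession φ₂ = ⊤ ∧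
            IsStrictlyConvexEntropy φ₁ ∧ IsStrictlyConvexEntropy φ₂ ∧
            StrongCompat φ₁ φ₂ (α Set.univ).toReal (β Set.univ).toReal) ∨
          (φ₁ = iotaOne ∧ φ₂ = iotaOne ∧ α Set.univ = β Set.univ))
    (Mstar : Matrix (Fin q) (Fin p) ℝ)
    (πstar : Measure ((Fin p → ℝ) × (Fin q → ℝ)))
    (hMstar : frobNorm Mstar ≤ r) (hπfin : IsFiniteMeasure πstar)
    (hπsupp : πstar ((X ×ˢ Y)ᶜ) = 0)
    (hmin : ∀ (M : Matrix (Fin q) (Fin p) ℝ)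
      (π : Measure ((Fin p → ℝ) × (Fin q → ℝ))),
      frobNorm M ≤ r → IsFiniteMeasure π → π ((X ×ˢ Y)ᶜ) = 0 →
      Jip α β φ₁ φ₂ 0 Mstar πstar ≤ Jip α β φ₁ φ₂ 0 M π) :
    ∀ π : Measure ((Fin p → ℝ) × (Fin q → ℝ)), IsFiniteMeasure π →
      π.map Prod.fst = πstar.map Prod.fst → π.map Prod.snd = πstar.map Prod.snd →
      gwObj πstar ≤ gwObj π := by
  intro π hπfinite h1 h2
  haveI := hπfin
  haveI := hπfinite
  have hXm : MeasurableSet (Xᶜ) := hX.isClosed.measurableSet.compl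
  have hYm : MeasurableSet (Yᶜ) := hY.isClosed.measurableSet.compl
  have hβT : β Set.univ ≠ ⊤ := measure_ne_top β _
  have hαT : α Set.univ ≠ ⊤ := measure_ne_top α _
  have hsubf : (Prod.fst ⁻¹' Xᶜ : Set ((Fin p → ℝ) × (Fin q → ℝ))) ⊆ (X ×ˢ Y)ᶜ :=
    fun z hz hz2 => hz hz2.1
  have hsubs : (Prod.snd ⁻¹' Yᶜ : Set ((Fin p → ℝ) × (Fin q → ℝ))) ⊆ (X ×ˢ Y)ᶜ :=
    fun z hz hz2 => hz hz2.2
  have hsub : ((X ×ˢ Y)ᶜ : Set ((Fin p → ℝ) × (Fin q → ℝ)))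
      ⊆ (Prod.fst ⁻¹' Xᶜ) ∪ (Prod.snd ⁻¹' Yᶜ) := by
    intro z hz
    by_contra h
    simp only [Set.mem_union, Set.mem_preimage, Set.mem_compl_iff, not_or, not_not] at h
    exact hz ⟨h.1, h.2⟩
  -- π is supported on X ×ˢ Y
  have hπ1 : π (Prod.fst ⁻¹' Xᶜ) = 0 := by
    rw [← Measure.map_apply measurable_fst hXm, h1, Measure.map_apply measurable_fst hXm]
    exact measure_mono_null hsubf hπsupp
  have hπ2 : π (Prod.snd ⁻¹' Yᶜ) = 0 := by
    rw [← Measure.map_apply measurable_snd hYm, h2, Measure.map_apply measurable_snd hYm]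
    exact measure_mono_null hsubs hπsupp
  have hπc : π ((X ×ˢ Y)ᶜ) = 0 :=
    measure_mono_null hsub (measure_union_null hπ1 hπ2)
  -- uniform bound on the support
  obtain ⟨R₁, hR₁0, hR₁⟩ := aux_bound hX
  obtain ⟨R₂, hR₂0, hR₂⟩ := aux_bound hY
  have hR0 : (0:ℝ) ≤ max R₁ R₂ := le_trans hR₁0 (le_max_left _ _)
  have hBs : ∀ (ρ : Measure ((Fin p → ℝ) × (Fin q → ℝ))), ρ ((X ×ˢ Y)ᶜ) = 0 →
      BddSupp ρ (max R₁ R₂) := by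
    intro ρ hρ
    filter_upwards [mem_ae_iff.2 hρ] with z hz
    exact ⟨fun j => (hR₁ z.1 hz.1 j).trans (le_max_left _ _),
      fun i => (hR₂ z.2 hz.2 i).trans (le_max_right _ _)⟩
  have hBπ : BddSupp π (max R₁ R₂) := hBs π hπc
  have hBπs : BddSupp πstar (max R₁ R₂) := hBs πstar hπsupp
  -- a feasible plan with finite objective
  obtain ⟨c, hcT, hφc1, hφc2⟩ := exists_good_c α β hα hβ φ₁ φ₂ hφ
  haveI : IsFiniteMeasure (c • (α.prod β)) := isFiniteMeasure_smul _ hcT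
  have hprod0 : (α.prod β) ((X ×ˢ Y)ᶜ) = 0 := by
    refine measure_mono_null hsub (measure_union_null ?_ ?_)
    · have e : (Prod.fst ⁻¹' Xᶜ : Set ((Fin p → ℝ) × (Fin q → ℝ))) = Xᶜ ×ˢ Set.univ := by
        ext z; simp
      rw [e, Measure.prod_prod, hαsupp, zero_mul]
    · have e : (Prod.snd ⁻¹' Yᶜ : Set ((Fin p → ℝ) × (Fin q → ℝ))) = Set.univ ×ˢ Yᶜ := by
        ext z; simp
      rw [e, Measure.prod_prod, hβsupp, mul_zero]
  have hπ₀supp : (c • (α.prod β)) ((X ×ˢ Y)ᶜ) = 0 := by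
    rw [Measure.smul_apply, hprod0, smul_eq_mul, mul_zero]
  have hmapf : (c • (α.prod β)).map Prod.fst = (c * β Set.univ) • α := by
    rw [Measure.map_smul, Measure.map_fst_prod, smul_smul]
  have hmaps : (c • (α.prod β)).map Prod.snd = (c * α Set.univ) • β := by
    rw [Measure.map_smul, Measure.map_snd_prod, smul_smul]
  have hd1π₀ : phiDiv φ₁ ((c • (α.prod β)).map Prod.fst) α ≠ ⊤ := by
    rw [hmapf, phiDiv_smul φ₁ α (ENNReal.mul_ne_top hcT hβT)]
    exact ENNReal.mul_ne_top hφc1 hαT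
  have hd2π₀ : phiDiv φ₂ ((c • (α.prod β)).map Prod.snd) β ≠ ⊤ := by
    rw [hmaps, phiDiv_smul φ₂ β (ENNReal.mul_ne_top hcT hαT)]
    exact ENNReal.mul_ne_top hφc2 hβT
  have hJ0 : Jip α β φ₁ φ₂ 0 0 (c • (α.prod β)) ≠ ⊤ := by
    rw [Jip_eq_real α β φ₁ φ₂ 0 (c • (α.prod β)) hd1π₀ hd2π₀]
    exact EReal.coe_ne_top _
  have hle0 := hmin 0 (c • (α.prod β)) (by rw [frobNorm_zero]; exact hr.le)
    inferInstance hπ₀supp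
  -- the optimal divergences are finite
  have hd1s : phiDiv φ₁ (πstar.map Prod.fst) α ≠ ⊤ := by
    intro h
    rw [Jip_top₁ α β φ₁ φ₂ Mstar πstar h] at hle0
    exact hJ0 (top_le_iff.1 hle0)
  have hd2s : phiDiv φ₂ (πstar.map Prod.snd) β ≠ ⊤ := by
    intro h
    rw [Jip_top₂ α β φ₁ φ₂ Mstar πstar h] at hle0
    exact hJ0 (top_le_iff.1 hle0)
  have hd1π : phiDiv φ₁ (π.map Prod.fst) α ≠ ⊤ := by rw [h1]; exact hd1s
  have hd2π : phiDiv φ₂ (π.map Prod.snd) β ≠ ⊤ := by rw [h2]; exact hd2s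
  -- compare with the competitor (Mopt r π, π)
  have hcmp := hmin (Mopt r π) π (frob_Mopt_le hr.le π) hπfinite hπc
  rw [Jip_eq_real α β φ₁ φ₂ Mstar πstar hd1s hd2s,
    Jip_eq_real α β φ₁ φ₂ (Mopt r π) π hd1π hd2π, h1, h2, EReal.coe_le_coe_iff] at hcmp
  have hip : ipIntegral (Mopt r π) π ≤ ipIntegral Mstar πstar := by linarith
  have hipπ : ipIntegral (Mopt r π) π = r * frobNorm (Cmat π) := ip_Mopt hBπ
  have hipstar : ipIntegral Mstar πstar ≤ r * frobNorm (Cmat πstar) := by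
    rw [ip_eq hBπs]
    calc ∑ i, ∑ j, Mstar i j * Cmat πstar i j
        ≤ frobNorm Mstar * frobNorm (Cmat πstar) := frob_cauchy _ _
      _ ≤ r * frobNorm (Cmat πstar) :=
          mul_le_mul_of_nonneg_right hMstar (frobNorm_nonneg _)
  have hfrob : frobNorm (Cmat π) ≤ frobNorm (Cmat πstar) := by
    have : r * frobNorm (Cmat π) ≤ r * frobNorm (Cmat πstar) := by linarith
    exact le_of_mul_le_mul_left this hr
  have hS : ∑ i, ∑ j, (Cmat π i j) ^ 2 ≤ ∑ i, ∑ j, (Cmat πstar i j) ^ 2 := by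
    rw [← frobNorm_sq, ← frobNorm_sq]
    exact pow_le_pow_left₀ (frobNorm_nonneg _) hfrob 2
  -- the GW objective decomposition
  have e1 : (∫ z, ∫ z', (∑ j, z.1 j * z'.1 j) ^ 2 ∂π ∂π)
      = (∫ z, ∫ z', (∑ j, z.1 j * z'.1 j) ^ 2 ∂πstar ∂πstar) := by
    rw [T1_marg (π := π), T1_marg (π := πstar), h1]
  have e2 : (∫ z, ∫ z', (∑ i, z.2 i * z'.2 i) ^ 2 ∂π ∂π)
      = (∫ z, ∫ z', (∑ i, z.2 i * z'.2 i) ^ 2 ∂πstar ∂πstar) := by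
    rw [T2_marg (π := π), T2_marg (π := πstar), h2]
  rw [gw_eq hBπs hR0, gw_eq hBπ hR0, e1, e2]
  linarith
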